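/- Let Φ have block-RIP constants, T the chunk support of X with |T| ≤ s̄, and let T̂ be any chunk support with |T̂| ≤ s̄. Let R = (I − Φ_{[T̂]} Φ_{[T̂]}^†)(Φ_{[T]} X^{[T]} + N). Then ‖R‖_F ≤ √(1 + δ_{s̄|d}) · ‖X^{[T∖T̂]}‖_F + ‖N‖_F. -/

import Mathlib

open Matrix

def BlockRIPBound {M K d : ℕ} (Φ : Matrix (Fin M) (Fin K × Fin d) ℂ)
    (k : ℕ) (δ : ℝ) : Prop :=
  ∀ x : (Fin K × Fin d) → ℂ,
    {n : Fin K | ∃ j, x (n, j) ≠ 0}.ncard ≤ k →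
      ((1 - δ) * ∑ p, ‖x p‖ ^ 2 ≤ ∑ i, ‖Φ.mulVec x i‖ ^ 2 ∧
        ∑ i, ‖Φ.mulVec x i‖ ^ 2 ≤ (1 + δ) * ∑ p, ‖x p‖ ^ 2)

def subCols {M K d : ℕ} (Φ : Matrix (Fin M) (Fin K × Fin d) ℂ) (T : Finset (Fin K)) :
    Matrix (Fin M) ({x // x ∈ T} × Fin d) ℂ :=
  fun i p => Φ i (p.1.1, p.2)

noncomputable def frob {m n : Type*} [Fintype m] [Fintype n] (A : Matrix m n ℂ) : ℝ :=
  Real.sqrt (∑ i, ∑ j, ‖A i j‖ ^ 2)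

noncomputable def pinvFC {m n : Type*} [Fintype m] [Fintype n] [DecidableEq n]
    (A : Matrix m n ℂ) : Matrix n m ℂ :=
  (Aᴴ * A)⁻¹ * Aᴴ

/-- `X^{[S]}`: the matrix keeping only the chunks of `X` indexed by `S` (zero elsewhere). -/
def restrictChunks {K d L : ℕ} (X : Matrix (Fin K × Fin d) (Fin L) ℂ)
    (S : Finset (Fin K)) : Matrix (Fin K × Fin d) (Fin L) ℂ :=
  fun p l => if p.1 ∈ S then X p l else 0

set_option linter.unusedSectionVars false

section helpers
variable {m n : Type*} [Fintype m] [Fintype n]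

noncomputable def toE (A : Matrix m n ℂ) : EuclideanSpace ℂ (m × n) :=
  (WithLp.equiv 2 _).symm (fun p => A p.1 p.2)

lemma frob_eq_norm_toE (A : Matrix m n ℂ) : frob A = ‖toE A‖ := by
  rw [EuclideanSpace.norm_eq, frob, Fintype.sum_prod_type]
  rfl

lemma frob_nonneg (A : Matrix m n ℂ) : 0 ≤ frob A := Real.sqrt_nonneg _

lemma frob_add_le (A B : Matrix m n ℂ) : frob (A + B) ≤ frob A + frob B := by
  have h : toE (A + B) = toE A + toE B := rfl
  rw [frob_eq_norm_toE, frob_eq_norm_toE, frob_eq_norm_toE, h]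
  exact norm_add_le _ _

set_option maxHeartbeats 800000 in
/-- Contraction for matrices with `Pᴴ * P = P`. -/
lemma mulVec_contract (P : Matrix m m ℂ) (hP : Pᴴ * P = P) (y : m → ℂ) :
    ∑ i, ‖(P *ᵥ y) i‖ ^ 2 ≤ ∑ i, ‖y i‖ ^ 2 := by
  set z : m → ℂ := P *ᵥ y with hz
  have key : star z ⬝ᵥ z = star y ⬝ᵥ z := by
    rw [hz, star_mulVec, ← dotProduct_mulVec, mulVec_mulVec, hP]
  have hzz : star z ⬝ᵥ z = ((∑ i, ‖z i‖ ^ 2 : ℝ) : ℂ) := by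
    simp only [dotProduct, Pi.star_apply, Complex.star_def]
    push_cast
    congr 1
    ext i
    rw [mul_comm, Complex.mul_conj']
  set ye : EuclideanSpace ℂ m := (WithLp.equiv 2 _).symm y with hye
  set ze : EuclideanSpace ℂ m := (WithLp.equiv 2 _).symm z with hze
  have hinner : (inner ℂ ye ze : ℂ) = star y ⬝ᵥ z := by
    rw [PiLp.inner_apply]
    refine Finset.sum_congr rfl fun i _ => ?_
    exact RCLike.inner_apply' (y i) (z i)
  have hCS : ‖(inner ℂ ye ze : ℂ)‖ ≤ ‖ye‖ * ‖ze‖ := norm_inner_le_norm _ _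
  have hny : ‖ye‖ = Real.sqrt (∑ i, ‖y i‖ ^ 2) := EuclideanSpace.norm_eq _
  have hnz : ‖ze‖ = Real.sqrt (∑ i, ‖z i‖ ^ 2) := EuclideanSpace.norm_eq _
  have h1 : (∑ i, ‖z i‖ ^ 2 : ℝ) ≤ Real.sqrt (∑ i, ‖y i‖ ^ 2) * Real.sqrt (∑ i, ‖z i‖ ^ 2) := by
    calc (∑ i, ‖z i‖ ^ 2 : ℝ) = ‖(((∑ i, ‖z i‖ ^ 2 : ℝ)) : ℂ)‖ := by
          rw [Complex.norm_real]
          exact (Real.norm_of_nonneg (by positivity)).symm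
      _ = ‖(inner ℂ ye ze : ℂ)‖ := by rw [hinner, ← key, hzz]
      _ ≤ ‖ye‖ * ‖ze‖ := hCS
      _ = _ := by rw [hny, hnz]
  have hsq : Real.sqrt (∑ i, ‖z i‖ ^ 2) ^ 2 = ∑ i, ‖z i‖ ^ 2 := Real.sq_sqrt (by positivity)
  have hsq2 : Real.sqrt (∑ i, ‖y i‖ ^ 2) ^ 2 = ∑ i, ‖y i‖ ^ 2 := Real.sq_sqrt (by positivity)
  nlinarith [Real.sqrt_nonneg (∑ i, ‖z i‖ ^ 2), Real.sqrt_nonneg (∑ i, ‖y i‖ ^ 2), h1, hsq, hsq2]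

lemma frob_mul_contract {k : Type*} [Fintype k] (P : Matrix m m ℂ) (hP : Pᴴ * P = P)
    (B : Matrix m k ℂ) : frob (P * B) ≤ frob B := by
  rw [frob, frob]
  apply Real.sqrt_le_sqrt
  rw [Finset.sum_comm, Finset.sum_comm (γ := m)]
  refine Finset.sum_le_sum fun l _ => ?_
  exact mulVec_contract P hP (fun i => B i l)

end helpers

section algebra
variable {m n : Type*} [Fintype m] [Fintype n] [DecidableEq n] [DecidableEq m]

lemma pinv_mul_self (A : Matrix m n ℂ) (hunit : IsUnit (Aᴴ * A).det) :
    pinvFC A * A = 1 := by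
  rw [pinvFC, Matrix.mul_assoc, nonsing_inv_mul _ hunit]

lemma proj_mul_self_eq_zero (A : Matrix m n ℂ) (hunit : IsUnit (Aᴴ * A).det) :
    (1 - A * pinvFC A) * A = 0 := by
  rw [Matrix.sub_mul, Matrix.one_mul, Matrix.mul_assoc, pinv_mul_self A hunit, Matrix.mul_one,
    sub_self]

lemma proj_herm (A : Matrix m n ℂ) : (1 - A * pinvFC A)ᴴ = 1 - A * pinvFC A := by
  have hQ : (pinvFC A)ᴴ = A * (Aᴴ * A)⁻¹ := by
    rw [pinvFC, conjTranspose_mul, conjTranspose_conjTranspose, conjTranspose_nonsing_inv,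
      conjTranspose_mul, conjTranspose_conjTranspose]
  rw [conjTranspose_sub, conjTranspose_one, conjTranspose_mul, hQ, pinvFC, Matrix.mul_assoc]

lemma proj_herm_mul (A : Matrix m n ℂ) (hunit : IsUnit (Aᴴ * A).det) :
    (1 - A * pinvFC A)ᴴ * (1 - A * pinvFC A) = 1 - A * pinvFC A := by
  rw [proj_herm]
  have h2 : (A * pinvFC A) * (A * pinvFC A) = A * pinvFC A := by
    rw [← Matrix.mul_assoc, Matrix.mul_assoc A (pinvFC A) A, pinv_mul_self A hunit,
      Matrix.mul_one]
  rw [Matrix.sub_mul, Matrix.one_mul, Matrix.mul_sub, Matrix.mul_one, h2]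
  abel

end algebra

lemma sum_over_subtype {K d : ℕ} (That : Finset (Fin K)) (f : Fin K × Fin d → ℂ)
    (hf : ∀ p : Fin K × Fin d, p.1 ∉ That → f p = 0) :
    ∑ p : Fin K × Fin d, f p = ∑ q : {x // x ∈ That} × Fin d, f (q.1.1, q.2) := by
  rw [Fintype.sum_prod_type, Fintype.sum_prod_type]
  refine ((Finset.sum_subset (Finset.subset_univ That)
    (fun nn _ hn => Finset.sum_eq_zero fun j _ => hf (nn, j) hn)).symm).trans ?_
  exact (Finset.sum_coe_sort That (fun nn => ∑ j, f (nn, j))).symm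

lemma gram_unit {M K d : ℕ} (Φ : Matrix (Fin M) (Fin K × Fin d) ℂ) (sbar : ℕ) (δ : ℝ)
    (hδ1 : δ < 1) (hRIP : BlockRIPBound Φ sbar δ) (That : Finset (Fin K))
    (hThat : That.card ≤ sbar) :
    IsUnit ((subCols Φ That)ᴴ * subCols Φ That).det := by
  classical
  set A := subCols Φ That with hA
  rw [isUnit_iff_ne_zero]
  intro hdet
  obtain ⟨v, hv0, hv⟩ := Matrix.exists_mulVec_eq_zero_iff.2 hdet
  set x : Fin K × Fin d → ℂ := fun p => if h : p.1 ∈ That then v (⟨p.1, h⟩, p.2) else 0 with hx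
  have hxv : ∀ q : {y // y ∈ That} × Fin d, x (q.1.1, q.2) = v q := by
    rintro ⟨⟨b, hb⟩, j⟩
    exact dif_pos hb
  have hΦx : Φ *ᵥ x = A *ᵥ v := by
    funext i
    show ∑ p, Φ i p * x p = ∑ q, A i q * v q
    rw [sum_over_subtype That (fun p => Φ i p * x p)
      (fun p hp => by simp [hx, hp])]
    exact Finset.sum_congr rfl fun q _ => by rw [hxv q]; rfl
  have h0 : star (A *ᵥ v) ⬝ᵥ (A *ᵥ v) = 0 := by
    rw [star_mulVec, ← dotProduct_mulVec, mulVec_mulVec, hv, dotProduct_zero]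
  have hsum0 : ∑ i, ‖(A *ᵥ v) i‖ ^ 2 = 0 := by
    have : star (A *ᵥ v) ⬝ᵥ (A *ᵥ v) = ((∑ i, ‖(A *ᵥ v) i‖ ^ 2 : ℝ) : ℂ) := by
      simp only [dotProduct, Pi.star_apply, Complex.star_def]
      push_cast
      congr 1
      ext i
      rw [mul_comm, Complex.mul_conj']
    rw [this] at h0
    exact_mod_cast h0
  have hsupp : {nn : Fin K | ∃ j, x (nn, j) ≠ 0}.ncard ≤ sbar := by
    have hsub : {nn : Fin K | ∃ j, x (nn, j) ≠ 0} ⊆ ↑That := by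
      intro nn hnn
      obtain ⟨j, hj⟩ := hnn
      by_contra hc
      rw [Finset.mem_coe] at hc
      exact hj (by simp [hx, hc])
    calc {nn : Fin K | ∃ j, x (nn, j) ≠ 0}.ncard ≤ (↑That : Set (Fin K)).ncard :=
          Set.ncard_le_ncard hsub (Set.toFinite _)
      _ = That.card := Set.ncard_coe_finset _
      _ ≤ sbar := hThat
  have hlow := (hRIP x hsupp).1
  rw [show Φ.mulVec x = A *ᵥ v from hΦx, hsum0] at hlow
  have hxsum : ∑ p, ‖x p‖ ^ 2 ≤ 0 := by
    nlinarith [Finset.sum_nonneg (fun p (_ : p ∈ Finset.univ) => sq_nonneg ‖x p‖)]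
  have hx0 : ∀ p, x p = 0 := by
    intro p
    have := (Finset.sum_eq_zero_iff_of_nonneg
      (fun p (_ : p ∈ Finset.univ) => sq_nonneg ‖x p‖)).1
      (le_antisymm hxsum (Finset.sum_nonneg fun p _ => sq_nonneg ‖x p‖)) p (Finset.mem_univ p)
    simpa [pow_eq_zero_iff] using this
  apply hv0
  funext q
  rw [← hxv q, hx0]
  rfl

lemma factor_restrict {M K d L : ℕ} (Φ : Matrix (Fin M) (Fin K × Fin d) ℂ)
    (X : Matrix (Fin K × Fin d) (Fin L) ℂ) (S That : Finset (Fin K)) (hS : S ⊆ That) :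
    ∃ Y : Matrix ({x // x ∈ That} × Fin d) (Fin L) ℂ,
      Φ * restrictChunks X S = subCols Φ That * Y := by
  classical
  refine ⟨fun q l => restrictChunks X S (q.1.1, q.2) l, ?_⟩
  funext i l
  show ∑ p, Φ i p * restrictChunks X S p l = ∑ q, subCols Φ That i q * restrictChunks X S (q.1.1, q.2) l
  exact sum_over_subtype That (fun p => Φ i p * restrictChunks X S p l)
    (fun p hp => by
      have : p.1 ∉ S := fun h => hp (hS h)
      simp [restrictChunks, this])

/-- Residue bound: if `T` is the chunk support of `X` (`|T| ≤ s̄`), `|T̂| ≤ s̄` and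
`R = (I − Φ_{[T̂]} Φ_{[T̂]}†)(Φ_{[T]} X^{[T]} + N)`, then
`‖R‖_F ≤ √(1 + δ_{s̄|d}) ‖X^{[T∖T̂]}‖_F + ‖N‖_F`. -/
theorem residue_bound {M K d L : ℕ}
    (Φ : Matrix (Fin M) (Fin K × Fin d) ℂ) (sbar : ℕ) (δ : ℝ)
    (hδ0 : 0 ≤ δ) (hδ1 : δ < 1) (hRIP : BlockRIPBound Φ sbar δ)
    (X : Matrix (Fin K × Fin d) (Fin L) ℂ) (Nmat : Matrix (Fin M) (Fin L) ℂ)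
    (T That : Finset (Fin K))
    (hTX : ∀ n : Fin K, n ∈ T ↔ ∃ j l, X (n, j) l ≠ 0)
    (hT : T.card ≤ sbar) (hThat : That.card ≤ sbar)
    (R : Matrix (Fin M) (Fin L) ℂ)
    (hR : R = (1 - subCols Φ That * pinvFC (subCols Φ That)) * (Φ * X + Nmat)) :
    frob R ≤ Real.sqrt (1 + δ) * frob (restrictChunks X (T \ That)) + frob Nmat := by
  classical
  set A := subCols Φ That with hA
  set P : Matrix (Fin M) (Fin M) ℂ := 1 - A * pinvFC A with hPdef
  have hunit : IsUnit (Aᴴ * A).det := gram_unit Φ sbar δ hδ1 hRIP That hThat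
  have hPA : P * A = 0 := proj_mul_self_eq_zero A hunit
  have hPP : Pᴴ * P = P := proj_herm_mul A hunit
  set Z := restrictChunks X (T \ That) with hZ
  -- X decomposes
  have hX1 : X = Z + restrictChunks X (T ∩ That) := by
    funext p l
    show X p l = Z p l + restrictChunks X (T ∩ That) p l
    by_cases h1 : p.1 ∈ T
    · by_cases h2 : p.1 ∈ That
      · simp [hZ, restrictChunks, h1, h2]
      · simp [hZ, restrictChunks, h1, h2]
    · have hX0 : X p l = 0 := by
        by_contra hc
        exact h1 ((hTX p.1).2 ⟨p.2, l, by simpa using hc⟩)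
      simp [hZ, restrictChunks, h1, hX0]
  obtain ⟨Y, hY⟩ := factor_restrict Φ X (T ∩ That) That (Finset.inter_subset_right)
  have hRdec : R = P * (Φ * Z) + P * Nmat := by
    rw [hR, Matrix.mul_add]
    congr 1
    conv_lhs => rw [hX1]
    rw [Matrix.mul_add, Matrix.mul_add, hY, ← hA, ← Matrix.mul_assoc P A Y, hPA, Matrix.zero_mul, add_zero]
  -- RIP bound for columns of Z
  have hZcol : ∀ l, ∑ i, ‖(Φ *ᵥ (fun p => Z p l)) i‖ ^ 2 ≤ (1 + δ) * ∑ p, ‖Z p l‖ ^ 2 := by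
    intro l
    refine (hRIP _ ?_).2
    have hsub : {nn : Fin K | ∃ j, Z (nn, j) l ≠ 0} ⊆ ↑T := by
      intro nn hnn
      obtain ⟨j, hj⟩ := hnn
      rw [Finset.mem_coe]
      by_contra hc
      apply hj
      have : nn ∉ T \ That := fun h => hc (Finset.mem_sdiff.1 h).1
      simp [hZ, restrictChunks, this]
    calc {nn : Fin K | ∃ j, Z (nn, j) l ≠ 0}.ncard ≤ (↑T : Set (Fin K)).ncard :=
          Set.ncard_le_ncard hsub (Set.toFinite _)
      _ = T.card := Set.ncard_coe_finset _
      _ ≤ sbar := hT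
  have hfrobΦZ : frob (Φ * Z) ≤ Real.sqrt (1 + δ) * frob Z := by
    rw [frob, frob, ← Real.sqrt_mul (by linarith : (0:ℝ) ≤ 1 + δ)]
    apply Real.sqrt_le_sqrt
    rw [Finset.sum_comm]
    calc ∑ l, ∑ i, ‖(Φ * Z) i l‖ ^ 2
        = ∑ l, ∑ i, ‖(Φ *ᵥ (fun p => Z p l)) i‖ ^ 2 := rfl
      _ ≤ ∑ l, (1 + δ) * ∑ p, ‖Z p l‖ ^ 2 := Finset.sum_le_sum fun l _ => hZcol l
      _ = (1 + δ) * ∑ p, ∑ l, ‖Z p l‖ ^ 2 := by rw [← Finset.mul_sum, Finset.sum_comm]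
  calc frob R ≤ frob (P * (Φ * Z)) + frob (P * Nmat) := by
        rw [hRdec]; exact frob_add_le _ _
    _ ≤ frob (Φ * Z) + frob Nmat :=
        add_le_add (frob_mul_contract P hPP _) (frob_mul_contract P hPP _)
    _ ≤ Real.sqrt (1 + δ) * frob Z + frob Nmat := by
        exact add_le_add_left hfrobΦZ _
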